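/- For real λ₁, λ₂, λ₃ with λ₁+λ₂+λ₃ = 0 and |λᵢ| < π/2 for all i, the matrix Q(a, āᵀ) = diag(cos(λ₂−λ₃), cos(λ₃−λ₁), cos(λ₁−λ₂)), for a = diag(e^{iλ₁}, e^{iλ₂}, e^{iλ₃}), satisfies the bound det Q(a,āᵀ) ≤ 1 = |det(a)|², with equality iff λ₁=λ₂=λ₃=0. -/

import Mathlib

open Matrix

noncomputable def Qpol (a b : Matrix (Fin 3) (Fin 3) ℂ) : Matrix (Fin 3) (Fin 3) ℂ :=
  (2 : ℂ)⁻¹ • ((a + b).adjugate - a.adjugate - b.adjugate)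

lemma prod_erase0 (v : Fin 3 → ℂ) : ∏ j ∈ Finset.univ.erase (0:Fin 3), v j = v 1 * v 2 := by
  rw [show Finset.univ.erase (0:Fin 3) = {1,2} by decide]; simp
lemma prod_erase1 (v : Fin 3 → ℂ) : ∏ j ∈ Finset.univ.erase (1:Fin 3), v j = v 0 * v 2 := by
  rw [show Finset.univ.erase (1:Fin 3) = {0,2} by decide]; simp
lemma prod_erase2 (v : Fin 3 → ℂ) : ∏ j ∈ Finset.univ.erase (2:Fin 3), v j = v 0 * v 1 := by
  rw [show Finset.univ.erase (2:Fin 3) = {0,1} by decide]; simp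

lemma key (x y : ℝ) :
    (2:ℂ)⁻¹ * ((Complex.exp (Complex.I*x) + Complex.exp (-(Complex.I*x))) *
      (Complex.exp (Complex.I*y) + Complex.exp (-(Complex.I*y)))
      - Complex.exp (Complex.I*x) * Complex.exp (Complex.I*y)
      - Complex.exp (-(Complex.I*x)) * Complex.exp (-(Complex.I*y)))
    = (Real.cos (x - y) : ℂ) := by
  rw [Complex.ofReal_cos, Complex.cos]
  ring_nf
  simp only [← Complex.exp_add]
  push_cast
  ring_nf

lemma star_exp_I (t : ℝ) :
    star (Complex.exp (Complex.I * t)) = Complex.exp (-(Complex.I * t)) := by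
  rw [Complex.star_def, ← Complex.exp_conj]
  congr 1
  simp [Complex.conj_ofReal]

lemma cos_eq_one_of_abs_lt_pi {x : ℝ} (hx : |x| < Real.pi) (h : |Real.cos x| = 1) :
    x = 0 := by
  have hπ := Real.pi_pos
  have hlt := abs_lt.1 hx
  rcases abs_eq (by norm_num : (0:ℝ) ≤ 1) |>.1 h with h1 | h1
  · exact (Real.cos_eq_one_iff_of_lt_of_lt (by linarith) (by linarith)).1 h1
  · exfalso
    rcases Real.cos_eq_neg_one_iff.1 h1 with ⟨k, hk⟩
    rcases le_or_gt 0 k with hk0 | hk0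
    · have : (0:ℝ) ≤ (k:ℝ) := by exact_mod_cast hk0
      nlinarith
    · have : (k:ℝ) ≤ -1 := by exact_mod_cast (by omega : k ≤ -1)
      nlinarith

theorem stmt13 (l : Fin 3 → ℝ) (hsum : l 0 + l 1 + l 2 = 0)
    (hbd : ∀ i, |l i| < Real.pi / 2)
    (a : Matrix (Fin 3) (Fin 3) ℂ)
    (ha : a = Matrix.diagonal fun i => Complex.exp (Complex.I * (l i : ℂ))) :
    Qpol a aᴴ = Matrix.diagonal ![(Real.cos (l 1 - l 2) : ℂ),
        (Real.cos (l 2 - l 0) : ℂ), (Real.cos (l 0 - l 1) : ℂ)] ∧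
    ((Qpol a aᴴ).det).im = 0 ∧
    ((Qpol a aᴴ).det).re ≤ 1 ∧
    (1 : ℝ) = ‖a.det‖ ^ 2 ∧
    (((Qpol a aᴴ).det).re = 1 ↔ ∀ i, l i = 0) := by
  subst ha
  have hQ : Qpol (Matrix.diagonal fun i => Complex.exp (Complex.I * (l i : ℂ)))
      (Matrix.diagonal fun i => Complex.exp (Complex.I * (l i : ℂ)))ᴴ
      = Matrix.diagonal ![(Real.cos (l 1 - l 2) : ℂ),
        (Real.cos (l 2 - l 0) : ℂ), (Real.cos (l 0 - l 1) : ℂ)] := by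
    rw [Qpol, diagonal_conjTranspose, diagonal_add, adjugate_diagonal, adjugate_diagonal,
      adjugate_diagonal, diagonal_sub, diagonal_sub]
    ext i j
    rcases eq_or_ne i j with rfl | hij
    · rw [Matrix.smul_apply, diagonal_apply_eq, diagonal_apply_eq, smul_eq_mul]
      fin_cases i
      · simpa [prod_erase0, star_exp_I] using key (l 1) (l 2)
      · simpa [prod_erase1, star_exp_I, mul_comm, mul_assoc, mul_left_comm] using key (l 2) (l 0)
      · simpa [prod_erase2, star_exp_I] using key (l 0) (l 1)
    · rw [Matrix.smul_apply, diagonal_apply_ne _ hij, diagonal_apply_ne _ hij, smul_zero]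
  have hdet : (Qpol (Matrix.diagonal fun i => Complex.exp (Complex.I * (l i : ℂ)))
      (Matrix.diagonal fun i => Complex.exp (Complex.I * (l i : ℂ)))ᴴ).det
      = ((Real.cos (l 1 - l 2) * Real.cos (l 2 - l 0) * Real.cos (l 0 - l 1) : ℝ) : ℂ) := by
    rw [hQ, det_diagonal, Fin.prod_univ_three]
    push_cast
    simp
  set A := l 1 - l 2 with hA
  set B := l 2 - l 0 with hB
  set C := l 0 - l 1 with hC
  have habs : ∀ x y : Fin 3, |l x - l y| < Real.pi := by
    intro x y
    calc |l x - l y| ≤ |l x| + |l y| := abs_sub _ _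
    _ < Real.pi / 2 + Real.pi / 2 := add_lt_add (hbd x) (hbd y)
    _ = Real.pi := by ring
  have hle : ∀ x : ℝ, |Real.cos x| ≤ 1 := Real.abs_cos_le_one
  have hprod_le : Real.cos A * Real.cos B * Real.cos C ≤ 1 := by
    calc Real.cos A * Real.cos B * Real.cos C
        ≤ |Real.cos A * Real.cos B * Real.cos C| := le_abs_self _
    _ = |Real.cos A| * |Real.cos B| * |Real.cos C| := by rw [abs_mul, abs_mul]
    _ ≤ 1 * 1 * 1 := by gcongr <;> exact hle _
    _ = 1 := by norm_num
  refine ⟨hQ, by rw [hdet]; simp, by rw [hdet, Complex.ofReal_re]; exact hprod_le, ?_, ?_⟩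
  · rw [det_diagonal, Fin.prod_univ_three, ← Complex.exp_add, ← Complex.exp_add,
      ← mul_add, ← mul_add]
    have hc : (l 0 : ℂ) + (l 1 : ℂ) + (l 2 : ℂ) = 0 := by
      exact_mod_cast congrArg (fun x : ℝ => (x : ℂ)) hsum
    rw [hc, mul_zero, Complex.exp_zero]
    simp
  · rw [hdet]
    simp only [Complex.ofReal_re]
    constructor
    · intro h
      have habs1 : 1 ≤ |Real.cos A| * |Real.cos B| * |Real.cos C| := by
        rw [← abs_mul, ← abs_mul, ← h]
        exact le_abs_self _
      have hbc : |Real.cos B| * |Real.cos C| ≤ 1 := by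
        nlinarith [hle B, hle C, abs_nonneg (Real.cos B), abs_nonneg (Real.cos C)]
      have eA : |Real.cos A| = 1 := by
        refine le_antisymm (hle A) ?_
        nlinarith [habs1, mul_nonneg (abs_nonneg (Real.cos A)) (sub_nonneg.2 hbc),
          abs_nonneg (Real.cos A)]
      have eB : |Real.cos B| = 1 := by
        refine le_antisymm (hle B) ?_
        rw [eA, one_mul] at habs1
        nlinarith [habs1, hle C, abs_nonneg (Real.cos B), abs_nonneg (Real.cos C)]
      have hA0 : A = 0 := cos_eq_one_of_abs_lt_pi (habs 1 2) eA
      have hB0 : B = 0 := cos_eq_one_of_abs_lt_pi (habs 2 0) eB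
      have e1 : l 1 - l 2 = 0 := hA ▸ hA0
      have e2 : l 2 - l 0 = 0 := hB ▸ hB0
      have h0 : l 0 = 0 := by linarith
      have h1 : l 1 = 0 := by linarith
      have h2 : l 2 = 0 := by linarith
      intro i
      fin_cases i
      · exact h0
      · exact h1
      · exact h2
    · intro h
      simp [hA, hB, hC, h 0, h 1, h 2]
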